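/- Let γ₁, γ₂, h₁, h₂ > 0 with h₂ < h₁ and 1 < γ₂/γ₁ < (h₁/h₂)² (Case A₁), γ₂ − γ₁ > 1, d ≥ 2. Let r_c be the unique positive zero of g_c and R_s the unique positive zero of g_s (as in the paper). Then R_s < r_c. -/

import Mathlib

open Real

set_option maxHeartbeats 1000000 in
/-- Case A₁: `h₂ < h₁` and `1 < γ₂/γ₁ < (h₁/h₂)²`, `γ₂ − γ₁ > 1`.
If `r_c` is a positive zero of `g_c` and `R_s` a positive zero of `g_s`,
then `R_s < r_c`. -/
theorem Rs_lt_rc_caseA1 (d γ₁ γ₂ h₁ h₂ : ℝ) (hd : 2 ≤ d)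
    (hγ₁ : 0 < γ₁) (hγ₂ : 0 < γ₂) (hh₁ : 0 < h₁) (hh₂ : 0 < h₂)
    (hh : h₂ < h₁) (hlow : 1 < γ₂ / γ₁) (hhigh : γ₂ / γ₁ < (h₁ / h₂) ^ (2 : ℝ))
    (hγ : 1 < γ₂ - γ₁)
    (rc Rs : ℝ) (hrc : 0 < rc) (hRs : 0 < Rs)
    (hgc : γ₂ * h₂ ^ 2 / (rc ^ 2 + h₂ ^ 2) ^ (d / 2 + 1)
      - γ₁ * h₁ ^ 2 / (rc ^ 2 + h₁ ^ 2) ^ (d / 2 + 1) = 0)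
    (hgs : 1 - γ₂ * Rs ^ d / (Rs ^ 2 + h₂ ^ 2) ^ (d / 2)
      + γ₁ * Rs ^ d / (Rs ^ 2 + h₁ ^ 2) ^ (d / 2) = 0) :
    Rs < rc := by
  by_contra hcon
  push_neg at hcon
  have hd2 : (0:ℝ) < d / 2 := by linarith
  have hp : (0:ℝ) < d / 2 + 1 := by linarith
  have hrc2 : (0:ℝ) < rc ^ 2 := by positivity
  have hRs2 : (0:ℝ) < Rs ^ 2 := by positivity
  have h12 : h₂ ^ 2 < h₁ ^ 2 := by nlinarith
  have hD1 : (0:ℝ) < (rc ^ 2 + h₁ ^ 2) ^ (d / 2 + 1) :=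
    rpow_pos_of_pos (by positivity) _
  have hD2 : (0:ℝ) < (rc ^ 2 + h₂ ^ 2) ^ (d / 2 + 1) :=
    rpow_pos_of_pos (by positivity) _
  have hgc' : γ₂ * h₂ ^ 2 * (rc ^ 2 + h₁ ^ 2) ^ (d / 2 + 1)
      = γ₁ * h₁ ^ 2 * (rc ^ 2 + h₂ ^ 2) ^ (d / 2 + 1) := by
    have h0 : γ₂ * h₂ ^ 2 / (rc ^ 2 + h₂ ^ 2) ^ (d / 2 + 1)
        = γ₁ * h₁ ^ 2 / (rc ^ 2 + h₁ ^ 2) ^ (d / 2 + 1) := by linarith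
    rwa [div_eq_div_iff hD2.ne' hD1.ne'] at h0
  set F : ℝ → ℝ := fun y =>
    γ₂ * (1 - (1 + h₂ ^ 2 * y) ^ (-(d / 2)))
      - γ₁ * (1 - (1 + h₁ ^ 2 * y) ^ (-(d / 2))) with hFdef
  have hderivAt : ∀ y : ℝ, 0 ≤ y → HasDerivAt F
      (γ₂ * (d / 2 * (1 + h₂ ^ 2 * y) ^ (-(d / 2) - 1) * h₂ ^ 2)
        - γ₁ * (d / 2 * (1 + h₁ ^ 2 * y) ^ (-(d / 2) - 1) * h₁ ^ 2)) y := by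
    intro y hy
    have hb2 : (0:ℝ) < 1 + h₂ ^ 2 * y := by
      have := mul_nonneg (sq_nonneg h₂) hy; linarith
    have hb1 : (0:ℝ) < 1 + h₁ ^ 2 * y := by
      have := mul_nonneg (sq_nonneg h₁) hy; linarith
    have H2 : HasDerivAt (fun y : ℝ => (1 + h₂ ^ 2 * y) ^ (-(d / 2)))
        (h₂ ^ 2 * (-(d / 2)) * (1 + h₂ ^ 2 * y) ^ (-(d / 2) - 1)) y := by
      have hin : HasDerivAt (fun y : ℝ => 1 + h₂ ^ 2 * y) (h₂ ^ 2) y := by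
        simpa using ((hasDerivAt_id y).const_mul (h₂ ^ 2)).const_add 1
      exact hin.rpow_const (Or.inl hb2.ne')
    have H1 : HasDerivAt (fun y : ℝ => (1 + h₁ ^ 2 * y) ^ (-(d / 2)))
        (h₁ ^ 2 * (-(d / 2)) * (1 + h₁ ^ 2 * y) ^ (-(d / 2) - 1)) y := by
      have hin : HasDerivAt (fun y : ℝ => 1 + h₁ ^ 2 * y) (h₁ ^ 2) y := by
        simpa using ((hasDerivAt_id y).const_mul (h₁ ^ 2)).const_add 1
      exact hin.rpow_const (Or.inl hb1.ne')
    have hFD := (((hasDerivAt_const y (1:ℝ)).sub H2).const_mul γ₂).sub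
      (((hasDerivAt_const y (1:ℝ)).sub H1).const_mul γ₁)
    exact hFD.congr_deriv (by ring)
  have hderivneg : ∀ y ∈ Set.Ioo (0:ℝ) (rc ^ 2)⁻¹, deriv F y < 0 := by
    intro y hy
    obtain ⟨hy0, hylt⟩ := hy
    rw [(hderivAt y hy0.le).deriv]
    have hb2 : (0:ℝ) < 1 + h₂ ^ 2 * y := by
      have := mul_nonneg (sq_nonneg h₂) hy0.le; linarith
    have hb1 : (0:ℝ) < 1 + h₁ ^ 2 * y := by
      have := mul_nonneg (sq_nonneg h₁) hy0.le; linarith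
    have hry : rc ^ 2 * y < 1 := by
      calc rc ^ 2 * y < rc ^ 2 * (rc ^ 2)⁻¹ := (mul_lt_mul_iff_right₀ hrc2).mpr hylt
        _ = 1 := mul_inv_cancel₀ hrc2.ne'
    have hbase : (rc ^ 2 + h₂ ^ 2) * (1 + h₁ ^ 2 * y)
        < (rc ^ 2 + h₁ ^ 2) * (1 + h₂ ^ 2 * y) := by
      nlinarith [mul_pos (sub_pos.mpr h12) (sub_pos.mpr hry)]
    have hkey : γ₂ * h₂ ^ 2 * (1 + h₁ ^ 2 * y) ^ (d / 2 + 1)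
        < γ₁ * h₁ ^ 2 * (1 + h₂ ^ 2 * y) ^ (d / 2 + 1) := by
      have hpow : ((rc ^ 2 + h₂ ^ 2) * (1 + h₁ ^ 2 * y)) ^ (d / 2 + 1)
          < ((rc ^ 2 + h₁ ^ 2) * (1 + h₂ ^ 2 * y)) ^ (d / 2 + 1) :=
        rpow_lt_rpow (by positivity) hbase hp
      rw [mul_rpow (by positivity) (by positivity),
        mul_rpow (by positivity) (by positivity)] at hpow
      have h1 : γ₂ * h₂ ^ 2 * (1 + h₁ ^ 2 * y) ^ (d / 2 + 1)
            * (rc ^ 2 + h₁ ^ 2) ^ (d / 2 + 1)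
          < γ₁ * h₁ ^ 2 * (1 + h₂ ^ 2 * y) ^ (d / 2 + 1)
            * (rc ^ 2 + h₁ ^ 2) ^ (d / 2 + 1) := by
        calc γ₂ * h₂ ^ 2 * (1 + h₁ ^ 2 * y) ^ (d / 2 + 1)
              * (rc ^ 2 + h₁ ^ 2) ^ (d / 2 + 1)
            = γ₁ * h₁ ^ 2 * ((rc ^ 2 + h₂ ^ 2) ^ (d / 2 + 1)
              * (1 + h₁ ^ 2 * y) ^ (d / 2 + 1)) := by
              linear_combination ((1 + h₁ ^ 2 * y) ^ (d / 2 + 1)) * hgc'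
          _ < γ₁ * h₁ ^ 2 * ((rc ^ 2 + h₁ ^ 2) ^ (d / 2 + 1)
              * (1 + h₂ ^ 2 * y) ^ (d / 2 + 1)) :=
              mul_lt_mul_of_pos_left hpow (by positivity)
          _ = γ₁ * h₁ ^ 2 * (1 + h₂ ^ 2 * y) ^ (d / 2 + 1)
              * (rc ^ 2 + h₁ ^ 2) ^ (d / 2 + 1) := by ring
      exact (mul_lt_mul_iff_left₀ hD1).mp h1
    have hB2p : (0:ℝ) < (1 + h₂ ^ 2 * y) ^ (d / 2 + 1) := rpow_pos_of_pos hb2 _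
    have hB1p : (0:ℝ) < (1 + h₁ ^ 2 * y) ^ (d / 2 + 1) := rpow_pos_of_pos hb1 _
    have hfin : γ₂ * h₂ ^ 2 / (1 + h₂ ^ 2 * y) ^ (d / 2 + 1)
        < γ₁ * h₁ ^ 2 / (1 + h₁ ^ 2 * y) ^ (d / 2 + 1) :=
      (div_lt_div_iff₀ hB2p hB1p).mpr hkey
    rw [show (-(d / 2) - 1 : ℝ) = -(d / 2 + 1) by ring, rpow_neg hb2.le,
      rpow_neg hb1.le]
    have e : γ₂ * (d / 2 * ((1 + h₂ ^ 2 * y) ^ (d / 2 + 1))⁻¹ * h₂ ^ 2)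
        - γ₁ * (d / 2 * ((1 + h₁ ^ 2 * y) ^ (d / 2 + 1))⁻¹ * h₁ ^ 2)
        = d / 2 * (γ₂ * h₂ ^ 2 / (1 + h₂ ^ 2 * y) ^ (d / 2 + 1)
          - γ₁ * h₁ ^ 2 / (1 + h₁ ^ 2 * y) ^ (d / 2 + 1)) := by ring
    rw [e]
    exact mul_neg_of_pos_of_neg hd2 (sub_neg.mpr hfin)
  have hcont : ContinuousOn F (Set.Icc 0 (rc ^ 2)⁻¹) :=
    fun y hy => ((hderivAt y hy.1).continuousAt).continuousWithinAt
  have hanti : StrictAntiOn F (Set.Icc 0 (rc ^ 2)⁻¹) :=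
    strictAntiOn_of_deriv_neg (convex_Icc _ _) hcont
      (fun y hy => hderivneg y (by rwa [interior_Icc] at hy))
  have hmem0 : (0:ℝ) ∈ Set.Icc (0:ℝ) (rc ^ 2)⁻¹ := ⟨le_refl _, by positivity⟩
  have hle : (Rs ^ 2)⁻¹ ≤ (rc ^ 2)⁻¹ := by
    apply inv_anti₀ hrc2
    nlinarith
  have hmemR : (Rs ^ 2)⁻¹ ∈ Set.Icc (0:ℝ) (rc ^ 2)⁻¹ := ⟨by positivity, hle⟩
  have hlt : F ((Rs ^ 2)⁻¹) < F 0 := hanti hmem0 hmemR (by positivity)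
  have hF0 : F 0 = 0 := by simp [hFdef]
  have hA : ∀ h : ℝ, 0 < h →
      (1 + h ^ 2 * (Rs ^ 2)⁻¹) ^ (-(d / 2))
        = Rs ^ d / (Rs ^ 2 + h ^ 2) ^ (d / 2) := by
    intro h hhh
    have h1 : 1 + h ^ 2 * (Rs ^ 2)⁻¹ = (Rs ^ 2 + h ^ 2) / Rs ^ 2 := by
      field_simp
    rw [h1, rpow_neg (by positivity), div_rpow (by positivity) hRs2.le, inv_div]
    congr 1
    rw [← rpow_natCast Rs 2, ← rpow_mul hRs.le,
      show ((2:ℕ):ℝ) * (d / 2) = d by push_cast; ring]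
  have hFR : F ((Rs ^ 2)⁻¹) = γ₂ - γ₁ - 1 := by
    simp only [hFdef]
    rw [hA h₂ hh₂, hA h₁ hh₁]
    linear_combination hgs
  rw [hF0, hFR] at hlt
  linarith
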